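/- arXiv:1802.06726 — 3 statements merged into one kernel-verified Lean document; each statement's English description precedes it below -/
import Mathlib

section
/- Let g: ℝ → ℝ be continuously differentiable with g(x+1)=g(x)+1 for all x, p ∈ ℤ, and set m(x) = g(x) - x - p. Suppose sup_ℝ |g'(x) - 1| ≤ ε with 0 < ε < 1, and m(x) ≠ 0 for all x. Then for any x and any y in the closed interval with endpoints x and g(x) - p, we have 1 - ε ≤ m(y)/m(x) ≤ 1 + ε. -/
theorem stmt2 (g : ℝ → ℝ) (hg : ContDiff ℝ 1 g)
    (hper : ∀ x, g (x + 1) = g x + 1) (p : ℤ)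
    (m : ℝ → ℝ) (hm : ∀ x, m x = g x - x - p)
    (ε : ℝ) (hε0 : 0 < ε) (hε1 : ε < 1)
    (hsup : ∀ x, |deriv g x - 1| ≤ ε)
    (hm0 : ∀ x, m x ≠ 0) :
    ∀ x : ℝ, ∀ y ∈ Set.uIcc x (g x - p),
      1 - ε ≤ m y / m x ∧ m y / m x ≤ 1 + ε := by
  have hgd : Differentiable ℝ g := hg.differentiable one_ne_zero
  have hmd : ∀ z : ℝ, HasDerivAt m (deriv g z - 1) z := by
    intro z
    have : HasDerivAt (fun t => g t - t - (p : ℝ)) (deriv g z - 1) z := by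
      simpa using ((hgd z).hasDerivAt.sub (hasDerivAt_id z)).sub_const (p : ℝ)
    exact this.congr_of_eventuallyEq (Filter.Eventually.of_forall fun t => hm t)
  intro x y hy
  -- bound |m y - m x| ≤ ε * |m x|
  have hdiff : ‖m y - m x‖ ≤ ε * ‖y - x‖ := by
    apply Convex.norm_image_sub_le_of_norm_deriv_le
      (fun z _ => (hmd z).differentiableAt) ?_ (convex_univ) (Set.mem_univ x) (Set.mem_univ y)
    intro z _
    rw [(hmd z).deriv]
    exact hsup z
  have hyx : |y - x| ≤ |m x| := by
    have h1 : g x - p = x + m x := by rw [hm x]; ring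
    rw [h1] at hy
    -- fallback: direct
    rcases Set.mem_uIcc.mp hy with h | h
    · rw [abs_sub_le_iff]; constructor <;> nlinarith [abs_nonneg (m x), le_abs_self (m x), neg_abs_le (m x)]
    · rw [abs_sub_le_iff]; constructor <;> nlinarith [abs_nonneg (m x), le_abs_self (m x), neg_abs_le (m x)]
  have key : |m y - m x| ≤ ε * |m x| := by
    calc |m y - m x| ≤ ε * |y - x| := hdiff
    _ ≤ ε * |m x| := by nlinarith
  have hmx := hm0 x
  have hratio : |m y / m x - 1| ≤ ε := by
    have : m y / m x - 1 = (m y - m x) / m x := by field_simp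
    rw [this, abs_div]
    rw [div_le_iff₀ (abs_pos.mpr hmx)]
    exact key
  rw [abs_le] at hratio
  constructor <;> linarith [hratio.1, hratio.2]
end

section
/- Let g: ℝ → ℝ be increasing, differentiable, with g(x+1) = g(x)+1, conjugate to the irrational translation T_α, and let m_n(x) = g^{q_n}(x) - x - p_n where p_n/q_n are convergents of α. Then for any x ∈ ℝ, the sum over one period of the orbit satisfies Σ_{l=0}^{q_{n+1}-1} |m_n(g^l(x))| < 1. -/
lemma hint_per (h : ℝ → ℝ) (hhper : ∀ x, h (x + 1) = h x + 1) :
    ∀ (x : ℝ) (r : ℤ), h (x + r) = h x + r := by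
  have key : ∀ r : ℤ, ∀ x : ℝ, h (x + r) = h x + r := by
    intro r
    induction r using Int.induction_on with
    | zero => simp
    | succ i ih =>
      intro x
      have h1 : (x : ℝ) + ((i : ℤ) + 1 : ℤ) = (x + (i : ℤ)) + 1 := by push_cast; ring
      rw [h1, hhper, ih]; push_cast; ring
    | pred i ih =>
      intro x
      have h1 : (x : ℝ) + (-(i : ℤ) - 1 : ℤ) + 1 = x + (-(i:ℤ) : ℤ) := by push_cast; ring
      have := hhper (x + (-(i:ℤ) - 1 : ℤ))
      rw [h1, ih] at this
      push_cast at this ⊢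
      linarith
  exact fun x r => key r x

lemma sum_lt_one_aux (h : ℝ → ℝ) (hhmono : StrictMono h)
    (hZ : ∀ (x : ℝ) (r : ℤ), h (x + r) = h x + r)
    (Q : ℕ) (hQ : 0 < Q) (ε : ℝ) (hε : 0 < ε) (u : ℕ → ℝ)
    (hsep : ∀ i < Q, ∀ j < Q, i ≠ j → ∀ r : ℤ, ε ≤ |u i - u j - r|)
    (htot : (Q : ℝ) * ε < 1) :
    ∑ l ∈ Finset.range Q, (h (u l + ε) - h (u l)) < 1 := by
  -- reduce to fractional parts
  set v : ℕ → ℝ := fun l => Int.fract (u l) with hv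
  have hterm : ∀ l, h (u l + ε) - h (u l) = h (v l + ε) - h (v l) := by
    intro l
    have h1 : u l = v l + ((⌊u l⌋ : ℤ) : ℝ) := by
      show u l = Int.fract (u l) + ((⌊u l⌋ : ℤ) : ℝ)
      rw [Int.fract]; ring
    have e1 : v l + ((⌊u l⌋:ℤ):ℝ) + ε = (v l + ε) + ((⌊u l⌋:ℤ):ℝ) := by ring
    rw [h1, e1, hZ, hZ]; ring
  have hsepv : ∀ i < Q, ∀ j < Q, i ≠ j → ∀ r : ℤ, ε ≤ |v i - v j - r| := by
    intro i hi j hj hij r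
    have := hsep i hi j hj hij (⌊u i⌋ - ⌊u j⌋ + r)
    have h2 : v i - v j - r = u i - u j - ((⌊u i⌋ - ⌊u j⌋ + r : ℤ) : ℝ) := by
      show Int.fract (u i) - Int.fract (u j) - (r:ℝ) = _
      rw [Int.fract, Int.fract]; push_cast; ring
    rw [h2]; exact this
  -- sort
  set f : Fin Q → ℝ := fun i => v i with hf
  set σ : Equiv.Perm (Fin Q) := Tuple.sort f with hσ
  set w : Fin Q → ℝ := f ∘ σ with hw
  have hwmono : Monotone w := Tuple.monotone_sort f
  have hwinj : Function.Injective w := by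
    intro a b hab
    by_contra hne
    have hne' : (σ a : ℕ) ≠ (σ b : ℕ) := by
      simp only [ne_eq, Fin.val_eq_val]
      exact fun hc => hne (σ.injective hc)
    have := hsepv (σ a) (σ a).2 (σ b) (σ b).2 hne' 0
    simp only [Int.cast_zero, sub_zero] at this
    rw [show (v (σ a) : ℝ) - v (σ b) = w a - w b by simp [hw, hf]] at this
    rw [hab] at this; simp at this; linarith
  have hwsm : StrictMono w := hwmono.strictMono_of_injective hwinj
  -- the extended points
  set W : ℕ → ℝ := fun i => if hi : i < Q then w ⟨i, hi⟩ else w ⟨0, hQ⟩ + 1 with hW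
  have hW0 : W 0 = w ⟨0, hQ⟩ := by simp [hW, hQ]
  have hWQ : W Q = w ⟨0, hQ⟩ + 1 := by simp [hW]
  have hv01 : ∀ i : Fin Q, 0 ≤ w i ∧ w i < 1 := by
    intro i
    constructor
    · exact Int.fract_nonneg _
    · exact Int.fract_lt_one _
  have hεlt1 : ε < 1 := by
    have : (1:ℝ) ≤ (Q:ℝ) := by exact_mod_cast hQ
    nlinarith
  have key1 : ∀ i < Q, W i + ε ≤ W (i + 1) := by
    intro i hi
    by_cases hi1 : i + 1 < Q
    · have hne : ((σ ⟨i+1, hi1⟩ : Fin Q) : ℕ) ≠ ((σ ⟨i, hi⟩ : Fin Q) : ℕ) := by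
        simp only [ne_eq, Fin.val_eq_val]
        intro hc
        have := σ.injective hc
        simp [Fin.ext_iff] at this
      have hs := hsepv (σ ⟨i+1, hi1⟩) (σ ⟨i+1, hi1⟩).2 (σ ⟨i, hi⟩) (σ ⟨i, hi⟩).2 hne 0
      simp only [Int.cast_zero, sub_zero] at hs
      have hlt : w ⟨i, hi⟩ < w ⟨i+1, hi1⟩ := hwsm (by simp [Fin.lt_def])
      have : v (σ ⟨i+1, hi1⟩) - v (σ ⟨i, hi⟩) = w ⟨i+1, hi1⟩ - w ⟨i, hi⟩ := by simp [hw, hf]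
      rw [this] at hs
      rw [hW]; simp only [hi, hi1, dif_pos]
      rw [abs_of_pos (by linarith)] at hs
      linarith
    · have hiQ : i + 1 = Q := by omega
      have hW1 : W (i + 1) = w ⟨0, hQ⟩ + 1 := by rw [hiQ, hWQ]
      have hWi : W i = w ⟨i, hi⟩ := by rw [hW]; simp only [hi, dif_pos]
      rw [hW1, hWi]
      by_cases hQ2 : 1 < Q
      · -- Q ≥ 2, i = Q - 1 ≥ 1
        have hi0 : 0 < i := by omega
        have hne : ((σ ⟨i, hi⟩ : Fin Q) : ℕ) ≠ ((σ ⟨0, hQ⟩ : Fin Q) : ℕ) := by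
          simp only [ne_eq, Fin.val_eq_val]
          intro hc
          have := σ.injective hc
          simp [Fin.ext_iff] at this
          omega
        have hs := hsepv (σ ⟨i, hi⟩) (σ ⟨i, hi⟩).2 (σ ⟨0, hQ⟩) (σ ⟨0, hQ⟩).2 hne 1
        have heq : v (σ ⟨i, hi⟩) - v (σ ⟨0, hQ⟩) = w ⟨i, hi⟩ - w ⟨0, hQ⟩ := by simp [hw, hf]
        rw [heq] at hs
        push_cast at hs
        have hge : w ⟨0, hQ⟩ ≤ w ⟨i, hi⟩ := hwmono (by simp [Fin.le_def])
        have hlt1 : w ⟨i, hi⟩ - w ⟨0, hQ⟩ < 1 := by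
          have := (hv01 ⟨i, hi⟩).2; have := (hv01 ⟨0, hQ⟩).1; linarith
        rw [abs_of_neg (by linarith)] at hs
        linarith
      · -- Q = 1, i = 0
        have hi0 : i = 0 := by omega
        have : (⟨i, hi⟩ : Fin Q) = ⟨0, hQ⟩ := by simp [hi0]
        rw [this]
        linarith
  have key2 : ∃ i < Q, W i + ε < W (i + 1) := by
    by_contra hcon
    push_neg at hcon
    have hle : ∀ i ∈ Finset.range Q, W (i+1) - W i ≤ ε := by
      intro i hi
      have h1 := key1 i (Finset.mem_range.mp hi)
      have h2 := hcon i (Finset.mem_range.mp hi)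
      linarith
    have htel : ∑ i ∈ Finset.range Q, (W (i+1) - W i) = W Q - W 0 := Finset.sum_range_sub W Q
    have : W Q - W 0 ≤ Q * ε := by
      rw [← htel]
      calc ∑ i ∈ Finset.range Q, (W (i+1) - W i) ≤ ∑ i ∈ Finset.range Q, ε :=
        Finset.sum_le_sum hle
      _ = Q * ε := by simp [mul_comm]
    rw [hWQ, hW0] at this
    linarith
  -- rewrite sum
  have hsum1 : ∑ l ∈ Finset.range Q, (h (u l + ε) - h (u l))
      = ∑ l ∈ Finset.range Q, (h (W l + ε) - h (W l)) := by
    calc ∑ l ∈ Finset.range Q, (h (u l + ε) - h (u l))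
        = ∑ l ∈ Finset.range Q, (h (v l + ε) - h (v l)) := by
          exact Finset.sum_congr rfl (fun l _ => hterm l)
      _ = ∑ i : Fin Q, (h (f i + ε) - h (f i)) := by
          rw [← Fin.sum_univ_eq_sum_range (fun l => h (v l + ε) - h (v l)) Q]
      _ = ∑ i : Fin Q, (h (w i + ε) - h (w i)) := by
          rw [← Equiv.sum_comp σ (fun j => h (f j + ε) - h (f j))]
          rfl
      _ = ∑ i : Fin Q, (h (W i + ε) - h (W i)) := by
          apply Finset.sum_congr rfl
          intro i _
          have : W (i : ℕ) = w i := by rw [hW]; simp [i.2]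
          rw [this]
      _ = ∑ l ∈ Finset.range Q, (h (W l + ε) - h (W l)) := by
          rw [← Fin.sum_univ_eq_sum_range (fun l => h (W l + ε) - h (W l)) Q]
  rw [hsum1]
  obtain ⟨i₀, hi₀, hstrict⟩ := key2
  have hlt : ∑ l ∈ Finset.range Q, (h (W l + ε) - h (W l))
      < ∑ l ∈ Finset.range Q, (h (W (l+1)) - h (W l)) := by
    apply Finset.sum_lt_sum
    · intro i hi
      have := key1 i (Finset.mem_range.mp hi)
      have := hhmono.monotone this
      linarith [hhmono.monotone (key1 i (Finset.mem_range.mp hi))]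
    · exact ⟨i₀, Finset.mem_range.mpr hi₀, by
        have := hhmono hstrict
        linarith⟩
  have htel : ∑ l ∈ Finset.range Q, (h (W (l+1)) - h (W l)) = h (W Q) - h (W 0) :=
    Finset.sum_range_sub (fun l => h (W l)) Q
  rw [htel, hWQ, hW0] at hlt
  have : h (w ⟨0, hQ⟩ + 1) = h (w ⟨0, hQ⟩) + 1 := by
    have := hZ (w ⟨0, hQ⟩) 1; push_cast at this; exact this
  linarith

open GenContFract

section CF
variable (α : ℝ) (hα : Irrational α)
include hα

lemma cf_not_term : ∀ k, ¬(GenContFract.of α).TerminatedAt k := by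
  intro k hk
  have : (GenContFract.of α).Terminates := ⟨k, hk⟩
  obtain ⟨q', hq'⟩ := (terminates_iff_rat α).mp this
  exact hα ⟨q', hq'.symm⟩

lemma cf_den_ge_one (k : ℕ) : (1:ℝ) ≤ (GenContFract.of α).dens k := by
  have h1 : (Nat.fib (k+1) : ℝ) ≤ (GenContFract.of α).dens k :=
    succ_nth_fib_le_of_nth_den (Or.inr (cf_not_term α hα (k-1)))
  have h2 : 1 ≤ Nat.fib (k+1) := Nat.fib_pos.mpr k.succ_pos
  calc (1:ℝ) = ((1:ℕ):ℝ) := by norm_num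
  _ ≤ (Nat.fib (k+1) : ℝ) := by exact_mod_cast h2
  _ ≤ _ := h1

lemma cf_stream_ne (k : ℕ) :
    ∃ ifp, IntFractPair.stream α k = some ifp ∧ ifp.fr ≠ 0 := by
  have hnt := cf_not_term α hα k
  rw [of_terminatedAt_n_iff_succ_nth_intFractPair_stream_eq_none] at hnt
  have h1 : ¬(IntFractPair.stream α k = none ∨
      ∃ ifp, IntFractPair.stream α k = some ifp ∧ ifp.fr = 0) := by
    intro hc
    exact hnt (IntFractPair.succ_nth_stream_eq_none_iff.mpr hc)
  push_neg at h1
  obtain ⟨h2, h3⟩ := h1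
  obtain ⟨ifp, hifp⟩ := Option.ne_none_iff_exists'.mp h2
  exact ⟨ifp, hifp, h3 ifp hifp⟩

lemma cf_sign (k : ℕ) :
    0 < (-1:ℝ)^k * (α - (GenContFract.of α).convs k) := by
  obtain ⟨ifp, hifp, hfr⟩ := cf_stream_ne α hα k
  have hsub := sub_convs_eq hifp
  simp only [] at hsub
  rw [if_neg hfr] at hsub
  set B := ((GenContFract.of α).contsAux (k+1)).b with hB
  set pB := ((GenContFract.of α).contsAux k).b with hpB
  have hBpos : 0 < B := by
    have : (1:ℝ) ≤ (GenContFract.of α).dens k := cf_den_ge_one α hα k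
    rw [den_eq_conts_b, nth_cont_eq_succ_nth_contAux] at this
    linarith
  have hpBnn : 0 ≤ pB := zero_le_of_contsAux_b
  have hfrpos : 0 < ifp.fr :=
    lt_of_le_of_ne (IntFractPair.nth_stream_fr_nonneg hifp) (Ne.symm hfr)
  have hden : 0 < B * (ifp.fr⁻¹ * B + pB) := by
    have : 0 < ifp.fr⁻¹ := inv_pos.mpr hfrpos
    positivity
  rw [hsub]
  rw [show (-1:ℝ)^k * ((-1)^k / (B * (ifp.fr⁻¹ * B + pB)))
      = ((-1:ℝ)^k)^2 / (B * (ifp.fr⁻¹ * B + pB)) by ring]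
  have : ((-1:ℝ)^k)^2 = 1 := by
    rw [← pow_mul, mul_comm, pow_mul]; norm_num
  rw [this]
  positivity

lemma cf_det (k : ℕ) :
    (GenContFract.of α).nums k * (GenContFract.of α).dens (k+1)
      - (GenContFract.of α).dens k * (GenContFract.of α).nums (k+1) = (-1:ℝ)^(k+1) :=
  SimpContFract.determinant (s := SimpContFract.of α) (cf_not_term α hα k)

variable (p : ℕ → ℤ) (q : ℕ → ℕ)
  (hp : ∀ n, (p n : ℝ) = (GenContFract.of α).nums n)
  (hq : ∀ n, (q n : ℝ) = (GenContFract.of α).dens n)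
include hp hq

/-- `A k = (-1)^k * (q k * α - p k) = |q k α - p k| > 0`. -/
lemma cf_A_pos (k : ℕ) : 0 < (-1:ℝ)^k * ((q k : ℝ) * α - (p k : ℝ)) := by
  have h1 := cf_sign α hα k
  have hd := cf_den_ge_one α hα k
  have h2 : (q k : ℝ) * α - (p k : ℝ)
      = (GenContFract.of α).dens k * (α - (GenContFract.of α).convs k) := by
    rw [conv_eq_num_div_den, hp, hq]
    field_simp
  rw [h2]
  rw [show (-1:ℝ)^k * ((GenContFract.of α).dens k * (α - (GenContFract.of α).convs k))
      = (GenContFract.of α).dens k * ((-1:ℝ)^k * (α - (GenContFract.of α).convs k)) by ring]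
  positivity

lemma cf_abs_theta (k : ℕ) :
    |(q k : ℝ) * α - (p k : ℝ)| = (-1:ℝ)^k * ((q k : ℝ) * α - (p k : ℝ)) := by
  have h1 := cf_A_pos α hα p q hp hq k
  have h2 : |(-1:ℝ)^k * ((q k : ℝ) * α - (p k : ℝ))|
      = |(q k : ℝ) * α - (p k : ℝ)| := by
    rw [abs_mul, abs_pow, abs_neg, abs_one, one_pow, one_mul]
  rw [← h2, abs_of_pos h1]

lemma cf_detZ (k : ℕ) :
    p k * (q (k+1) : ℤ) - (q k : ℤ) * p (k+1) = -(-1:ℤ)^k := by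
  have h := cf_det α hα k
  rw [← hp, ← hq, ← hp, ← hq] at h
  have h2 : ((p k * (q (k+1) : ℤ) - (q k : ℤ) * p (k+1) : ℤ) : ℝ)
      = ((-(-1:ℤ)^k : ℤ) : ℝ) := by
    push_cast
    rw [pow_succ] at h
    push_cast at h
    linarith
  exact_mod_cast h2

/-- the key identity `q_{k+1} A_k + q_k A_{k+1} = 1`. -/
lemma cf_identity (k : ℕ) :
    (q (k+1) : ℝ) * ((-1:ℝ)^k * ((q k : ℝ) * α - (p k : ℝ)))
      + (q k : ℝ) * ((-1:ℝ)^(k+1) * ((q (k+1) : ℝ) * α - (p (k+1) : ℝ))) = 1 := by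
  have hdet := cf_detZ α hα p q hp hq k
  have hdetR : (p k : ℝ) * (q (k+1) : ℝ) - (q k : ℝ) * (p (k+1) : ℝ) = -(-1:ℝ)^k := by
    exact_mod_cast congrArg (fun z : ℤ => (z : ℝ)) hdet
  set s : ℝ := (-1:ℝ)^k with hs
  have hss : s * s = 1 := by
    rw [hs, ← pow_add]
    rw [show k + k = 2 * k by ring, pow_mul]; norm_num
  have hpow : (-1:ℝ)^(k+1) = -s := by rw [pow_succ, hs]; ring
  rw [hpow]
  linear_combination (-s) * hdetR + hss

lemma cf_total_lt (n : ℕ) :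
    (q (n+1) : ℝ) * ((-1:ℝ)^n * ((q n : ℝ) * α - (p n : ℝ))) < 1 := by
  have hid := cf_identity α hα p q hp hq n
  have hA1 := cf_A_pos α hα p q hp hq (n+1)
  have hqn : (1:ℝ) ≤ (q n : ℝ) := by rw [hq]; exact cf_den_ge_one α hα n
  nlinarith

/-- best approximation property -/
lemma cf_best (n : ℕ) (k r : ℤ) (hk : 0 < k) (hk2 : (k:ℝ) < (q (n+1) : ℝ)) :
    (-1:ℝ)^n * ((q n : ℝ) * α - (p n : ℝ)) ≤ |(k:ℝ) * α - (r:ℝ)| := by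
  have hdet := cf_detZ α hα p q hp hq n
  set s : ℤ := (-1:ℤ)^n with hsZ
  have hss : s * s = 1 := by
    rw [hsZ, ← pow_add, show n + n = 2 * n by ring, pow_mul]; norm_num
  set x : ℤ := s * (p (n+1) * k - (q (n+1) : ℤ) * r) with hx
  set y : ℤ := s * ((q n : ℤ) * r - p n * k) with hy
  have hxq : x * (q n : ℤ) + y * (q (n+1) : ℤ) = k := by
    rw [hx, hy]
    linear_combination (-s * k) * hdet + k * hss
  have hxp : x * p n + y * p (n+1) = r := by
    rw [hx, hy]
    linear_combination (-s * r) * hdet + r * hss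
  clear_value s x y
  have hqn1 : (1:ℤ) ≤ (q n : ℤ) := by
    have := cf_den_ge_one α hα n; rw [← hq] at this; exact_mod_cast this
  have hqn1' : (1:ℤ) ≤ (q (n+1) : ℤ) := by
    have := cf_den_ge_one α hα (n+1); rw [← hq] at this; exact_mod_cast this
  have hqn0 : (0:ℤ) ≤ (q n : ℤ) := by omega
  have hkZ : k < (q (n+1) : ℤ) := by exact_mod_cast hk2
  set θn : ℝ := (q n : ℝ) * α - (p n : ℝ) with hθn
  set θn1 : ℝ := (q (n+1) : ℝ) * α - (p (n+1) : ℝ) with hθn1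
  set An : ℝ := (-1:ℝ)^n * θn with hAn
  set An1 : ℝ := (-1:ℝ)^(n+1) * θn1 with hAn1
  have hAnpos : 0 < An := cf_A_pos α hα p q hp hq n
  have hAn1pos : 0 < An1 := cf_A_pos α hα p q hp hq (n+1)
  have hssR : ((-1:ℝ)^n) * ((-1:ℝ)^n) = 1 := by
    rw [← pow_add, show n + n = 2 * n by ring, pow_mul]; norm_num
  have h0 : (x:ℝ) * θn + (y:ℝ) * θn1 = (k:ℝ) * α - (r:ℝ) := by
    have hxqR : (x:ℝ) * (q n : ℝ) + (y:ℝ) * (q (n+1) : ℝ) = (k:ℝ) := by exact_mod_cast hxq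
    have hxpR : (x:ℝ) * (p n : ℝ) + (y:ℝ) * (p (n+1) : ℝ) = (r:ℝ) := by exact_mod_cast hxp
    rw [hθn, hθn1]
    linear_combination α * hxqR - hxpR
  have hreal : (k:ℝ) * α - (r:ℝ) = (-1:ℝ)^n * ((x:ℝ) * An - (y:ℝ) * An1) := by
    have e1 : (x:ℝ) * An - (y:ℝ) * An1 = (-1:ℝ)^n * ((x:ℝ) * θn + (y:ℝ) * θn1) := by
      rw [hAn, hAn1, pow_succ]; ring
    rw [e1, ← mul_assoc, hssR, one_mul, h0]
  have habs : |(k:ℝ) * α - (r:ℝ)| = |(x:ℝ) * An - (y:ℝ) * An1| := by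
    rw [hreal, abs_mul, abs_pow, abs_neg, abs_one, one_pow, one_mul]
  rw [habs]
  rcases eq_or_ne y 0 with hy0 | hyne
  · -- y = 0 : k = x * q n, x ≥ 1
    have hxk : x * (q n : ℤ) = k := by rw [← hxq, hy0]; ring
    have hxpos : 0 < x := by
      by_contra hcon
      push_neg at hcon
      nlinarith [mul_nonneg (neg_nonneg.mpr hcon) hqn0]
    have hx1 : (1:ℝ) ≤ (x:ℝ) := by exact_mod_cast hxpos
    have e1 := mul_le_mul_of_nonneg_right hx1 hAnpos.le
    rw [hy0]
    push_cast
    rw [zero_mul, sub_zero, abs_of_pos (by linarith)]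
    linarith
  · rcases eq_or_ne x 0 with hx0 | hxne
    · -- x = 0 : k = y * q (n+1), impossible
      exfalso
      have hyk : y * (q (n+1) : ℤ) = k := by rw [← hxq, hx0]; ring
      rcases lt_trichotomy y 0 with hc | hc | hc
      · nlinarith
      · exact hyne hc
      · nlinarith
    · rcases lt_trichotomy y 0 with hylt | hc | hygt
      · -- y < 0, so x > 0
        have hyq : y * (q (n+1):ℤ) ≤ -(q (n+1):ℤ) := by
          have := mul_le_mul_of_nonneg_right (show y ≤ -1 by omega) (show (0:ℤ) ≤ (q (n+1):ℤ) by omega)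
          linarith
        have hxpos : 0 < x := by
          by_contra hcon
          push_neg at hcon
          nlinarith [mul_nonneg (neg_nonneg.mpr hcon) hqn0]
        have hx1 : (1:ℝ) ≤ (x:ℝ) := by exact_mod_cast hxpos
        have hy1 : (y:ℝ) ≤ -1 := by exact_mod_cast (show y ≤ -1 by omega)
        have e1 := mul_le_mul_of_nonneg_right hx1 hAnpos.le
        have e2 := mul_le_mul_of_nonneg_right hy1 hAn1pos.le
        rw [abs_of_pos (by linarith)]
        linarith
      · exact absurd hc hyne
      · -- y > 0, so x < 0
        have hyq : (q (n+1):ℤ) ≤ y * (q (n+1):ℤ) := by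
          have := mul_le_mul_of_nonneg_right (show (1:ℤ) ≤ y by omega) (show (0:ℤ) ≤ (q (n+1):ℤ) by omega)
          linarith
        have hxneg : x < 0 := by
          by_contra hcon
          push_neg at hcon
          nlinarith [mul_nonneg hcon hqn0]
        have hx1 : (x:ℝ) ≤ -1 := by exact_mod_cast (show x ≤ -1 by omega)
        have hy1 : (1:ℝ) ≤ (y:ℝ) := by exact_mod_cast (show (1:ℤ) ≤ y by omega)
        have e1 := mul_le_mul_of_nonneg_right hx1 hAnpos.le
        have e2 := mul_le_mul_of_nonneg_right hy1 hAn1pos.le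
        rw [abs_of_neg (by linarith)]
        linarith

end CF

theorem stmt9 (g : ℝ → ℝ) (hgmono : StrictMono g) (hgdiff : Differentiable ℝ g)
    (hper : ∀ x, g (x + 1) = g x + 1)
    (α : ℝ) (hα : Irrational α)
    (h : ℝ → ℝ) (hhmono : StrictMono h) (hhcont : Continuous h)
    (hhsurj : Function.Surjective h) (hhper : ∀ x, h (x + 1) = h x + 1)
    (hconj : ∀ x, g (h x) = h (x + α))
    (p : ℕ → ℤ) (q : ℕ → ℕ)
    (hp : ∀ n, (p n : ℝ) = (GenContFract.of α).nums n)
    (hq : ∀ n, (q n : ℝ) = (GenContFract.of α).dens n)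
    (n : ℕ) (m : ℝ → ℝ) (hm : ∀ x, m x = g^[q n] x - x - p n) :
    ∀ x : ℝ, ∑ l ∈ Finset.range (q (n + 1)), |m (g^[l] x)| < 1 := by
  intro x
  obtain ⟨t, ht⟩ := hhsurj x
  have hZ := hint_per h hhper
  set θ : ℝ := (q n : ℝ) * α - (p n : ℝ) with hθ
  set ε : ℝ := (-1:ℝ)^n * θ with hε
  have hεpos : 0 < ε := cf_A_pos α hα p q hp hq n
  have habsθ : |θ| = ε := cf_abs_theta α hα p q hp hq n
  have htot : (q (n+1) : ℝ) * ε < 1 := cf_total_lt α hα p q hp hq n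
  have hbest := cf_best α hα p q hp hq n
  set Q := q (n+1) with hQdef
  have hQR1 : (1:ℝ) ≤ (Q:ℝ) := by rw [hQdef, hq]; exact cf_den_ge_one α hα (n+1)
  have hQpos : 0 < Q := by exact_mod_cast lt_of_lt_of_le one_pos hQR1
  -- orbit formula
  have horb : ∀ (k : ℕ) (y : ℝ), g^[k] (h y) = h (y + k * α) := by
    intro k
    induction k with
    | zero => intro y; simp
    | succ k ih =>
      intro y
      calc g^[k+1] (h y) = g (g^[k] (h y)) := Function.iterate_succ_apply' g k (h y)
        _ = g (h (y + k * α)) := by rw [ih]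
        _ = h (y + k * α + α) := hconj _
        _ = h (y + (↑(k+1) : ℝ) * α) := congrArg h (by push_cast; ring)
  -- the terms of the sum
  have hterm : ∀ l : ℕ, m (g^[l] x) = h (t + l * α + θ) - h (t + l * α) := by
    intro l
    rw [hm, ← ht, horb l t, horb (q n) (t + l * α)]
    have h2 : t + (l:ℝ) * α + (q n : ℝ) * α = (t + l * α + θ) + ((p n : ℤ) : ℝ) := by
      rw [hθ]; push_cast; ring
    rw [h2, hZ]
    ring
  set u : ℕ → ℝ := fun l => t + l * α + min θ 0 with hu
  have habs2 : ∀ l : ℕ, |m (g^[l] x)| = h (u l + ε) - h (u l) := by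
    intro l
    rw [hterm l]
    rcases (abs_eq hεpos.le).mp habsθ with hc | hc
    · have hmin : min θ 0 = 0 := min_eq_right (by linarith)
      have e1 : u l = t + l * α := by rw [hu]; simp [hmin]
      have e2 : u l + ε = t + l * α + θ := by rw [e1, ← hc]
      rw [e2, e1]
      exact abs_of_nonneg (sub_nonneg.mpr (hhmono.monotone (by linarith [hεpos])))
    · have hmin : min θ 0 = θ := min_eq_left (by linarith)
      have e1 : u l = t + l * α + θ := by rw [hu]; simp [hmin]
      have e2 : u l + ε = t + l * α := by rw [e1, hc]; ring
      rw [e2, e1]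
      rw [abs_of_nonpos (sub_nonpos.mpr (hhmono.monotone (by nlinarith)))]
      ring
  -- separation
  have hsep : ∀ i < Q, ∀ j < Q, i ≠ j → ∀ r : ℤ, ε ≤ |u i - u j - r| := by
    intro i hi j hj hij r
    have hiR : (i:ℝ) < (Q:ℝ) := by exact_mod_cast hi
    have hjR : (j:ℝ) < (Q:ℝ) := by exact_mod_cast hj
    have hi0 : (0:ℝ) ≤ (i:ℝ) := Nat.cast_nonneg i
    have hj0 : (0:ℝ) ≤ (j:ℝ) := Nat.cast_nonneg j
    rcases lt_or_gt_of_ne hij with hlt | hgt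
    · have hb := hbest ((j:ℤ) - i) (-r) (by omega)
        (by push_cast; linarith)
      rw [show u i - u j - (r:ℝ) = -(((((j:ℤ) - i : ℤ)):ℝ) * α - (((-r : ℤ)):ℝ)) by
        rw [hu]; push_cast; ring, abs_neg]
      exact hb
    · have hb := hbest ((i:ℤ) - j) r (by omega)
        (by push_cast; linarith)
      rw [show u i - u j - (r:ℝ) = ((((i:ℤ) - j : ℤ)):ℝ) * α - ((r : ℤ):ℝ) by
        rw [hu]; push_cast; ring]
      exact hb
  calc ∑ l ∈ Finset.range Q, |m (g^[l] x)|
      = ∑ l ∈ Finset.range Q, (h (u l + ε) - h (u l)) :=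
        Finset.sum_congr rfl (fun l _ => habs2 l)
    _ < 1 := sum_lt_one_aux h hhmono hZ Q hQpos ε hεpos u hsep htot
end

section
/- Let g: ℝ → ℝ be an increasing homeomorphism with g(x+1) = g(x)+1 and irrational rotation number α with convergents p_n/q_n. Set g_n(x) = g^{q_n}(x) - p_n. Then for every x ∈ ℝ, g_{n+1}(x) lies in the interval J_n(x) = [g_n^{-1}(x), g_n(x)]. -/
set_option autoImplicit false
open GenContFract in
lemma stmt19_nt (α : ℝ) (hα : Irrational α) (n : ℕ) :
    ((GenContFract.of α).dens n * α - (GenContFract.of α).nums n) * ((GenContFract.of α).dens (n+1) * α - (GenContFract.of α).nums (n+1)) < 0 ∧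
    |(GenContFract.of α).dens (n+1) * α - (GenContFract.of α).nums (n+1)| < |(GenContFract.of α).dens n * α - (GenContFract.of α).nums n| := by
  have hnt : ¬(GenContFract.of α).Terminates := by
    intro ht
    obtain ⟨r, hr⟩ := (terminates_iff_rat α).mp ht
    exact hα ⟨r, hr.symm⟩
  have hnterm : ∀ m, ¬(GenContFract.of α).TerminatedAt m := fun m hm => hnt ⟨m, hm⟩
  have hsome : ∀ m, ∃ ifp, IntFractPair.stream α m = some ifp := by
    intro m
    match m with
    | 0 => exact ⟨_, IntFractPair.stream_zero α⟩
    | k+1 =>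
      have := hnterm k
      rw [of_terminatedAt_n_iff_succ_nth_intFractPair_stream_eq_none] at this
      exact Option.ne_none_iff_exists'.mp this
  have hfr : ∀ m ifp, IntFractPair.stream α m = some ifp → 0 < ifp.fr ∧ ifp.fr < 1 := by
    intro m ifp hm
    have h1 := IntFractPair.nth_stream_fr_nonneg_lt_one hm
    refine ⟨h1.1.lt_of_ne' ?_, h1.2⟩
    intro h0
    obtain ⟨ifp', h'⟩ := hsome (m+1)
    rw [IntFractPair.stream_eq_none_of_fr_eq_zero hm h0] at h'
    cases h'
  have hdens1 : ∀ m, (1:ℝ) ≤ (GenContFract.of α).dens m := by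
    intro m
    have hyp : m = 0 ∨ ¬(GenContFract.of α).TerminatedAt (m-1) := Or.inr (hnterm _)
    calc (1:ℝ) ≤ (Nat.fib (m+1) : ℝ) := by
          exact_mod_cast Nat.succ_le_of_lt (Nat.fib_pos.mpr m.succ_pos)
      _ ≤ _ := succ_nth_fib_le_of_nth_den hyp
  have hcb : ∀ m, (0:ℝ) ≤ ((GenContFract.of α).contsAux m).b := fun m => zero_le_of_contsAux_b
  have hBrfl : ∀ m, ((GenContFract.of α).contsAux (m+1)).b = (GenContFract.of α).dens m := fun m => rfl
  have hDpos : ∀ m ifp, IntFractPair.stream α m = some ifp →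
      0 < ifp.fr⁻¹ * (GenContFract.of α).dens m + ((GenContFract.of α).contsAux m).b := by
    intro m ifp hm
    have h1 := hfr m ifp hm
    have h2 := hdens1 m
    have h3 := hcb m
    have h4 : 0 < ifp.fr⁻¹ := inv_pos.mpr h1.1
    nlinarith
  have key : ∀ m ifp, IntFractPair.stream α m = some ifp →
      (GenContFract.of α).dens m * α - (GenContFract.of α).nums m
        = (-1)^m / (ifp.fr⁻¹ * (GenContFract.of α).dens m + ((GenContFract.of α).contsAux m).b) := by
    intro m ifp hm
    have hsub := sub_convs_eq hm
    simp only [if_neg (hfr m ifp hm).1.ne'] at hsub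
    rw [hBrfl m, conv_eq_num_div_den] at hsub
    have hd : (0:ℝ) < (GenContFract.of α).dens m := lt_of_lt_of_le one_pos (hdens1 m)
    have hD := hDpos m ifp hm
    set d := (GenContFract.of α).dens m
    set N := (GenContFract.of α).nums m
    set E := ifp.fr⁻¹ * d + ((GenContFract.of α).contsAux m).b
    calc d * α - N = d * (α - N / d) := by field_simp
      _ = d * ((-1)^m / (d * E)) := by rw [hsub]
      _ = (-1)^m / E := by rw [div_mul_eq_div_div_swap]; field_simp
  -- stream values at n and n+1
  obtain ⟨ifp0, h0⟩ := hsome n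
  obtain ⟨ifp1, h1⟩ := hsome (n+1)
  have hfr0 := hfr n ifp0 h0
  have hfr1 := hfr (n+1) ifp1 h1
  have hs1 : IntFractPair.stream α (n+1) = some (IntFractPair.of ifp0.fr⁻¹) :=
    IntFractPair.stream_succ_of_some h0 hfr0.1.ne'
  have hifp1 : ifp1 = IntFractPair.of ifp0.fr⁻¹ := by
    rw [h1] at hs1; exact Option.some.inj hs1
  have hsplit : (ifp1.b : ℝ) + ifp1.fr = ifp0.fr⁻¹ := by
    rw [hifp1]
    exact Int.floor_add_fract _
  -- recurrence for contsAux
  have hget : (GenContFract.of α).s.get? n = some ⟨1, (ifp1.b : ℝ)⟩ :=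
    get?_of_eq_some_of_succ_get?_intFractPair_stream h1
  have hrec : (GenContFract.of α).contsAux (n+2)
      = ⟨(ifp1.b : ℝ) * ((GenContFract.of α).contsAux (n+1)).a + 1 * ((GenContFract.of α).contsAux n).a,
         (ifp1.b : ℝ) * ((GenContFract.of α).contsAux (n+1)).b + 1 * ((GenContFract.of α).contsAux n).b⟩ :=
    contsAux_recurrence hget rfl rfl
  have hrecb : ((GenContFract.of α).contsAux (n+2)).b
      = (ifp1.b : ℝ) * ((GenContFract.of α).contsAux (n+1)).b + ((GenContFract.of α).contsAux n).b := by
    rw [hrec]; ring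
  -- the denominators D n < D (n+1)
  set B0 := ((GenContFract.of α).contsAux n).b with hB0
  set B1 := ((GenContFract.of α).contsAux (n+1)).b with hB1
  set B2 := ((GenContFract.of α).contsAux (n+2)).b with hB2
  have hB1d : B1 = (GenContFract.of α).dens n := rfl
  have hB2d : B2 = (GenContFract.of α).dens (n+1) := rfl
  have hD0pos : 0 < ifp0.fr⁻¹ * (GenContFract.of α).dens n + B0 := hDpos n ifp0 h0
  have hD1pos : 0 < ifp1.fr⁻¹ * (GenContFract.of α).dens (n+1) + B1 := hDpos (n+1) ifp1 h1
  have hcmp : ifp0.fr⁻¹ * (GenContFract.of α).dens n + B0 < ifp1.fr⁻¹ * (GenContFract.of α).dens (n+1) + B1 := by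
    rw [← hB1d, ← hB2d]
    have hinv1 : 1 < ifp1.fr⁻¹ := (one_lt_inv₀ hfr1.1).mpr hfr1.2
    have hB1ge : (1:ℝ) ≤ B1 := hB1d ▸ hdens1 n
    have hB2ge : (1:ℝ) ≤ B2 := hB2d ▸ hdens1 (n+1)
    have hB0ge := hcb n
    rw [← hB0] at hB0ge
    nlinarith [hrecb, hsplit, mul_lt_mul_of_pos_left hinv1 (lt_of_lt_of_le one_pos hB2ge)]
  have k0 := key n ifp0 h0
  have k1 := key (n+1) ifp1 h1
  rw [k0, k1, ← hB0, ← hB1]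
  set D0 := ifp0.fr⁻¹ * (GenContFract.of α).dens n + B0
  set D1 := ifp1.fr⁻¹ * (GenContFract.of α).dens (n+1) + B1
  constructor
  · have : ((-1:ℝ))^n * ((-1:ℝ))^(n+1) = -1 := by
      rw [← pow_add]
      exact Odd.neg_one_pow ⟨n, by ring⟩
    have h01 : (0:ℝ) < D0 * D1 := mul_pos hD0pos hD1pos
    rw [div_mul_div_comm, this]
    exact div_neg_of_neg_of_pos (by norm_num) h01
  · rw [abs_div, abs_div, abs_pow, abs_pow, abs_neg, abs_one, one_pow, one_pow,
      abs_of_pos hD0pos, abs_of_pos hD1pos]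
    exact one_div_lt_one_div_of_lt hD0pos hcmp

set_option autoImplicit false
set_option maxHeartbeats 1000000

lemma stmt19_tr_int (f : ℝ → ℝ) (hf : ∀ x, f (x + 1) = f x + 1) (m : ℤ) (x : ℝ) :
    f (x + m) = f x + m := by
  induction m using Int.induction_on with
  | zero => simp
  | succ k ih =>
    have h1 : x + ((k : ℤ) + 1 : ℤ) = (x + (k : ℤ)) + 1 := by push_cast; ring
    rw [h1, hf, ih]; push_cast; ring
  | pred k ih =>
    have h1 : x + (-(k : ℤ) - 1 : ℤ) + 1 = x + (-(k : ℤ) : ℤ) := by push_cast; ring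
    have := hf (x + (-(k : ℤ) - 1 : ℤ))
    rw [h1, ih] at this
    push_cast at this ⊢
    linarith

lemma stmt19_iter_tr (f : ℝ → ℝ) (hf : ∀ x, f (x + 1) = f x + 1) (k : ℕ) (m : ℤ) (x : ℝ) :
    f^[k] (x + m) = f^[k] x + m := by
  induction k generalizing x with
  | zero => simp
  | succ j ih =>
    rw [Function.iterate_succ_apply, Function.iterate_succ_apply, stmt19_tr_int f hf, ih]

lemma stmt19_orb (g h : ℝ → ℝ) (α : ℝ) (hconj : ∀ x, g (h x) = h (x + α)) (k : ℕ) (x : ℝ) :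
    g^[k] (h x) = h (x + k * α) := by
  induction k generalizing x with
  | zero => simp
  | succ j ih =>
    rw [Function.iterate_succ_apply, hconj, ih]
    congr 1
    push_cast; ring

lemma stmt19_iter_mono (f : ℝ → ℝ) (hf : StrictMono f) (k : ℕ) : StrictMono f^[k] := by
  induction k with
  | zero => simpa using strictMono_id
  | succ j ih => rw [Function.iterate_succ]; exact ih.comp hf

-- rigidity: the sign of g^[a] x - x - b is constant, and matches the sign of a*α - b
lemma stmt19_rigid_ne (g : ℝ → ℝ) (hgcont : Continuous g) (hper : ∀ x, g (x + 1) = g x + 1)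
    (α : ℝ) (h : ℝ → ℝ) (hhmono : Monotone h) (hhsurj : Function.Surjective h)
    (hhper : ∀ x, h (x + 1) = h x + 1) (hconj : ∀ x, g (h x) = h (x + α))
    (a : ℕ) (b : ℤ) (hab : (a : ℝ) * α ≠ (b : ℝ)) :
    (∀ x, g^[a] x < x + b) ∨ (∀ x, x + b < g^[a] x) := by
  have hne : ∀ x, g^[a] x ≠ x + b := by
    intro x hx
    obtain ⟨y, hy⟩ := hhsurj x
    have hk : ∀ k : ℕ, g^[a * k] x = x + k * b := by
      intro k
      induction k with
      | zero => simp
      | succ j ih =>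
        have : a * (j + 1) = a * j + a := by ring
        rw [this, Function.iterate_add_apply, hx,
          stmt19_iter_tr g hper (a * j) b x, ih]
        push_cast; ring
    have heq : ∀ k : ℕ, h (y + (a * k : ℕ) * α) = h (y + ((k : ℤ) * b : ℤ)) := by
      intro k
      have l1 : h (y + ((a * k : ℕ) : ℝ) * α) = x + (k : ℝ) * b := by
        rw [← stmt19_orb g h α hconj (a * k) y, hy, hk k]
      have l2 : h (y + (((k : ℤ) * b : ℤ) : ℝ)) = x + (k : ℝ) * b := by
        rw [stmt19_tr_int h hhper ((k : ℤ) * b) y, hy]; push_cast; ring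
      rw [l1, l2]
    rcases hab.lt_or_gt with hlt | hlt
    · -- a*α < b
      have hd : (0 : ℝ) < (b : ℝ) - (a : ℝ) * α := by linarith
      obtain ⟨k, hk'⟩ := exists_nat_gt (1 / ((b : ℝ) - (a : ℝ) * α))
      have hk1 : 1 < (k : ℝ) * ((b : ℝ) - (a : ℝ) * α) := by
        rw [div_lt_iff₀ hd] at hk'
        linarith
      have hle : y + ((a * k : ℕ) : ℝ) * α + 1 ≤ y + ((k : ℤ) * b : ℤ) := by
        push_cast
        nlinarith
      have := hhmono hle
      rw [show y + ((a * k : ℕ) : ℝ) * α + 1 = (y + ((a * k : ℕ) : ℝ) * α) + 1 from rfl,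
        hhper, heq k] at this
      linarith
    · -- b < a*α
      have hd : (0 : ℝ) < (a : ℝ) * α - (b : ℝ) := by linarith
      obtain ⟨k, hk'⟩ := exists_nat_gt (1 / ((a : ℝ) * α - (b : ℝ)))
      have hk1 : 1 < (k : ℝ) * ((a : ℝ) * α - (b : ℝ)) := by
        rw [div_lt_iff₀ hd] at hk'
        linarith
      have hle : y + (((k : ℤ) * b : ℤ) : ℝ) + 1 ≤ y + ((a * k : ℕ) : ℝ) * α := by
        push_cast
        nlinarith
      have := hhmono hle
      rw [show y + (((k : ℤ) * b : ℤ) : ℝ) + 1 = (y + (((k : ℤ) * b : ℤ) : ℝ)) + 1 from rfl,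
        hhper, ← heq k] at this
      linarith
  by_contra hcon
  push_neg at hcon
  obtain ⟨⟨x1, hx1⟩, ⟨x2, hx2⟩⟩ := hcon
  -- x1 + b ≤ g^[a] x1 and g^[a] x2 ≤ x2 + b : IVT gives a point where equal
  have hcf : Continuous fun x : ℝ => g^[a] x - x := (hgcont.iterate a).sub continuous_id
  have hmem : (b : ℝ) ∈ Set.uIcc ((fun x : ℝ => g^[a] x - x) x2) ((fun x : ℝ => g^[a] x - x) x1) := by
    rw [Set.mem_uIcc]
    left
    constructor <;> simp only [] <;> linarith
  obtain ⟨x0, _, hx0⟩ := intermediate_value_uIcc hcf.continuousOn hmem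
  exact hne x0 (by simp only [] at hx0; linarith)

lemma stmt19_rigid_lt (g : ℝ → ℝ) (hgcont : Continuous g) (hper : ∀ x, g (x + 1) = g x + 1)
    (α : ℝ) (h : ℝ → ℝ) (hhmono : Monotone h) (hhsurj : Function.Surjective h)
    (hhper : ∀ x, h (x + 1) = h x + 1) (hconj : ∀ x, g (h x) = h (x + α))
    (a : ℕ) (b : ℤ) (hab : (a : ℝ) * α < (b : ℝ)) :
    ∀ x, g^[a] x < x + b := by
  rcases stmt19_rigid_ne g hgcont hper α h hhmono hhsurj hhper hconj a b (ne_of_lt hab) with H | H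
  · exact H
  · exfalso
    have h1 := H (h 0)
    rw [stmt19_orb g h α hconj a 0] at h1
    have h2 : h (0 + (a : ℝ) * α) ≤ h (0 + (b : ℤ)) := hhmono (by push_cast; linarith)
    rw [stmt19_tr_int h hhper b 0] at h2
    linarith

lemma stmt19_rigid_gt (g : ℝ → ℝ) (hgcont : Continuous g) (hper : ∀ x, g (x + 1) = g x + 1)
    (α : ℝ) (h : ℝ → ℝ) (hhmono : Monotone h) (hhsurj : Function.Surjective h)
    (hhper : ∀ x, h (x + 1) = h x + 1) (hconj : ∀ x, g (h x) = h (x + α))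
    (a : ℕ) (b : ℤ) (hab : (b : ℝ) < (a : ℝ) * α) :
    ∀ x, x + b < g^[a] x := by
  rcases stmt19_rigid_ne g hgcont hper α h hhmono hhsurj hhper hconj a b (ne_of_gt hab) with H | H
  · exfalso
    have h1 := H (h 0)
    rw [stmt19_orb g h α hconj a 0] at h1
    have h2 : h (0 + (b : ℤ)) ≤ h (0 + (a : ℝ) * α) := hhmono (by push_cast; linarith)
    rw [stmt19_tr_int h hhper b 0] at h2
    linarith
  · exact H

theorem stmt19 (g : ℝ → ℝ) (hgmono : StrictMono g) (hgcont : Continuous g)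
    (hgsurj : Function.Surjective g) (hper : ∀ x, g (x + 1) = g x + 1)
    (α : ℝ) (hα : Irrational α)
    -- Poincaré semi-conjugacy to the translation by α
    (h : ℝ → ℝ) (hhmono : Monotone h) (hhcont : Continuous h)
    (hhsurj : Function.Surjective h) (hhper : ∀ x, h (x + 1) = h x + 1)
    (hconj : ∀ x, g (h x) = h (x + α))
    (p : ℕ → ℤ) (q : ℕ → ℕ)
    (hp : ∀ n, (p n : ℝ) = (GenContFract.of α).nums n)
    (hq : ∀ n, (q n : ℝ) = (GenContFract.of α).dens n)
    (ginv : ℝ → ℝ) (hginv : Function.LeftInverse ginv g ∧ Function.RightInverse ginv g)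
    (gn : ℕ → ℝ → ℝ) (hgn : ∀ n x, gn n x = g^[q n] x - p n)
    (gninv : ℕ → ℝ → ℝ) (hgninv : ∀ n x, gninv n x = ginv^[q n] (x + p n)) :
    ∀ n : ℕ, ∀ x : ℝ, gn (n + 1) x ∈ Set.uIcc (gninv n x) (gn n x) := by
  have hginvmono : StrictMono ginv := by
    intro u v huv
    by_contra hc
    push_neg at hc
    have h2 := hgmono.monotone hc
    rw [hginv.2 u, hginv.2 v] at h2
    exact absurd huv (not_lt.mpr h2)
  intro n x
  obtain ⟨hS1, hS2⟩ := stmt19_nt α hα n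
  rw [← hq n, ← hp n, ← hq (n+1), ← hp (n+1)] at hS1 hS2
  have hql : ((q n : ℝ)) ≤ ((q (n+1) : ℝ)) := by
    rw [hq, hq]; exact GenContFract.of_den_mono
  have hqle : q n ≤ q (n+1) := Nat.cast_le.mp hql
  have hca1 : ((q (n+1) - q n : ℕ) : ℝ) = (q (n+1) : ℝ) - (q n : ℝ) := by
    push_cast [Nat.cast_sub hqle]; ring
  rcases lt_trichotomy ((q n : ℝ) * α - (p n : ℝ)) 0 with hneg | hzero | hpos
  · -- β n < 0, so β (n+1) > 0
    have hpos1 : 0 < (q (n+1) : ℝ) * α - (p (n+1) : ℝ) := by nlinarith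
    have habs : (q (n+1) : ℝ) * α - (p (n+1) : ℝ) < -((q n : ℝ) * α - (p n : ℝ)) := by
      rw [abs_of_pos hpos1, abs_of_neg hneg] at hS2; linarith
    have key1 : ∀ y, y + ((p (n+1) - p n : ℤ) : ℝ) < g^[q (n+1) - q n] y := by
      apply stmt19_rigid_gt g hgcont hper α h hhmono hhsurj hhper hconj
      rw [hca1]; push_cast; linarith
    have hup : gn n x < gn (n+1) x := by
      have h1 := key1 (g^[q n] x)
      rw [← Function.iterate_add_apply, Nat.sub_add_cancel hqle] at h1
      rw [hgn, hgn]
      push_cast at h1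
      linarith
    have key2 : ∀ y, g^[q n + q (n+1)] y < y + ((p n + p (n+1) : ℤ) : ℝ) := by
      apply stmt19_rigid_lt g hgcont hper α h hhmono hhsurj hhper hconj
      push_cast; linarith
    have hdown : gn (n + 1) x < gninv n x := by
      have h2 := key2 x
      rw [Function.iterate_add_apply] at h2
      have h3 : g^[q n] (gn (n+1) x) = g^[q n] (g^[q (n+1)] x) + ((-(p (n+1)) : ℤ) : ℝ) := by
        rw [hgn, show g^[q (n+1)] x - ((p (n+1) : ℤ) : ℝ)
            = g^[q (n+1)] x + ((-(p (n+1)) : ℤ) : ℝ) by push_cast; ring,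
          stmt19_iter_tr g hper]
      have h4 : g^[q n] (gn (n+1) x) < x + ((p n : ℤ) : ℝ) := by
        push_cast at h3 h2 ⊢; linarith
      have h5 := stmt19_iter_mono ginv hginvmono (q n) h4
      rw [(hginv.1.iterate (q n)) (gn (n+1) x)] at h5
      rw [hgninv]
      exact h5
    exact Set.mem_uIcc.mpr (Or.inr ⟨le_of_lt hup, le_of_lt hdown⟩)
  · exfalso; rw [hzero, zero_mul] at hS1; exact lt_irrefl 0 hS1
  · -- β n > 0, so β (n+1) < 0
    have hneg1 : (q (n+1) : ℝ) * α - (p (n+1) : ℝ) < 0 := by nlinarith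
    have habs : -((q (n+1) : ℝ) * α - (p (n+1) : ℝ)) < (q n : ℝ) * α - (p n : ℝ) := by
      rw [abs_of_neg hneg1, abs_of_pos hpos] at hS2; linarith
    have key1 : ∀ y, g^[q (n+1) - q n] y < y + ((p (n+1) - p n : ℤ) : ℝ) := by
      apply stmt19_rigid_lt g hgcont hper α h hhmono hhsurj hhper hconj
      rw [hca1]; push_cast; linarith
    have hup : gn (n+1) x < gn n x := by
      have h1 := key1 (g^[q n] x)
      rw [← Function.iterate_add_apply, Nat.sub_add_cancel hqle] at h1
      rw [hgn, hgn]
      push_cast at h1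
      linarith
    have key2 : ∀ y, y + ((p n + p (n+1) : ℤ) : ℝ) < g^[q n + q (n+1)] y := by
      apply stmt19_rigid_gt g hgcont hper α h hhmono hhsurj hhper hconj
      push_cast; linarith
    have hdown : gninv n x < gn (n + 1) x := by
      have h2 := key2 x
      rw [Function.iterate_add_apply] at h2
      have h3 : g^[q n] (gn (n+1) x) = g^[q n] (g^[q (n+1)] x) + ((-(p (n+1)) : ℤ) : ℝ) := by
        rw [hgn, show g^[q (n+1)] x - ((p (n+1) : ℤ) : ℝ)
            = g^[q (n+1)] x + ((-(p (n+1)) : ℤ) : ℝ) by push_cast; ring,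
          stmt19_iter_tr g hper]
      have h4 : x + ((p n : ℤ) : ℝ) < g^[q n] (gn (n+1) x) := by
        push_cast at h3 h2 ⊢; linarith
      have h5 := stmt19_iter_mono ginv hginvmono (q n) h4
      rw [(hginv.1.iterate (q n)) (gn (n+1) x)] at h5
      rw [hgninv]
      exact h5
    exact Set.mem_uIcc.mpr (Or.inl ⟨le_of_lt hdown, le_of_lt hup⟩)
end
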